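/- If either |B| ≥ |B|_c, or 0 < |B| < |B|_c and |ξ| ≤ |ξ|_{vc}^B, then α(s) ≥ 0 for every s > 0. -/

import Mathlib

open MeasureTheory Set Filter Topology

noncomputable section

/-- The set of Rayleigh quotients defining the critical magnetic number `|B|_c`. -/
def BcSet (g ρp ρm : ℝ) : Set ℝ :=
  {r | ∃ φ : ℝ → ℝ, (∃ K, LipschitzWith K φ) ∧ φ (-1) = 0 ∧ φ 1 = 0 ∧
    ¬ (∀ᵐ y ∂(volume.restrict (Icc (-1:ℝ) 1)), φ y = 0) ∧
    r = g * (ρp - ρm) * (φ 0) ^ 2 / ∫ y in (-1:ℝ)..1, (deriv φ y) ^ 2}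

/-- The set of quotients defining the vertical critical frequency `|ξ|_{vc}^B`. -/
def XivcSet (g ρp ρm B : ℝ) : Set ℝ :=
  {r | ∃ φ : ℝ → ℝ, ContDiff ℝ 2 φ ∧ φ (-1) = 0 ∧ φ 1 = 0 ∧
    deriv φ (-1) = 0 ∧ deriv φ 1 = 0 ∧
    0 < g * (ρp - ρm) * (φ 0) ^ 2 - B ^ 2 * ∫ y in (-1:ℝ)..1, (deriv φ y) ^ 2 ∧
    r = (B ^ 2 * ∫ y in (-1:ℝ)..1, (deriv (deriv φ) y) ^ 2) /
        (g * (ρp - ρm) * (φ 0) ^ 2 - B ^ 2 * ∫ y in (-1:ℝ)..1, (deriv φ y) ^ 2)}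

/-- The set of quotients defining the horizontal critical frequency `|ξ|_{hc}^B`. -/
def XihcSet (g ρp ρm B : ℝ) : Set ℝ :=
  {r | ∃ φ : ℝ → ℝ, (∃ K, LipschitzWith K φ) ∧ φ (-1) = 0 ∧ φ 1 = 0 ∧
    ¬ (∀ᵐ y ∂(volume.restrict (Icc (-1:ℝ) 1)), φ y = 0) ∧
    r = (g * (ρp - ρm) * (φ 0) ^ 2 - B ^ 2 * ∫ y in (-1:ℝ)..1, (deriv φ y) ^ 2) /
        (B ^ 2 * ∫ y in (-1:ℝ)..1, (φ y) ^ 2)}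

/-- The magnetic part `E₀` of the energy of the vertical problem. -/
def E0 (g ρp ρm B ξ : ℝ) (ψ : ℝ → ℝ) : ℝ :=
  (1/2) * (∫ y in (-1:ℝ)..1, B ^ 2 * ((deriv ψ y) ^ 2 + (deriv (deriv ψ) y) ^ 2 / ξ ^ 2)) -
    (1/2) * (g * (ρp - ρm)) * (ψ 0) ^ 2

/-- The viscous part `E₁` of the energy, with piecewise viscosity `μ₊` above, `μ₋` below. -/
def E1 (μp μm ξ : ℝ) (ψ : ℝ → ℝ) : ℝ :=
  (1/2) * ∫ y in (-1:ℝ)..1,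
    (if 0 < y then μp else μm) *
      (4 * ξ ^ 2 * (deriv ψ y) ^ 2 + (ξ ^ 2 * ψ y + deriv (deriv ψ) y) ^ 2)

/-- The normalization functional `J`, with piecewise density `ρ₊` above, `ρ₋` below. -/
def Jfun (ρp ρm ξ : ℝ) (ψ : ℝ → ℝ) : ℝ :=
  (1/2) * ∫ y in (-1:ℝ)..1,
    (if 0 < y then ρp else ρm) * (ξ ^ 2 * (ψ y) ^ 2 + (deriv ψ y) ^ 2)

/-- `ψ` is an admissible test function: `C²` with vanishing boundary values of `ψ` and `ψ'`. -/
def Adm (ψ : ℝ → ℝ) : Prop :=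
  ContDiff ℝ 2 ψ ∧ ψ (-1) = 0 ∧ ψ 1 = 0 ∧ deriv ψ (-1) = 0 ∧ deriv ψ 1 = 0

/-- `α(s)`: the infimum of the modified energy `E(ψ;s) = ξ²E₀(ψ) + sE₁(ψ)` over admissible
`ψ` normalized by `J(ψ) = 1`. -/
def alpha (ρp ρm μp μm g B ξ s : ℝ) : ℝ :=
  sInf {r : ℝ | ∃ ψ : ℝ → ℝ, Adm ψ ∧ Jfun ρp ρm ξ ψ = 1 ∧
    r = ξ ^ 2 * E0 g ρp ρm B ξ ψ + s * E1 μp μm ξ ψ}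

lemma psi0_eq_zero_of_int (ψ : ℝ → ℝ) (hψ : ContDiff ℝ 2 ψ)
    (hm : ψ (-1) = 0) (hI : ∫ y in (-1:ℝ)..1, (deriv ψ y)^2 = 0) : ψ 0 = 0 := by
  have hdiff : Differentiable ℝ ψ := hψ.differentiable (by norm_num)
  have hc1 : Continuous (deriv ψ) := hψ.continuous_deriv (by norm_num)
  have hint : IntegrableOn (fun y => (deriv ψ y)^2) (Ioc (-1:ℝ) 1) volume :=
    (hc1.pow 2).integrableOn_Ioc
  have h0 : ∫ y in Ioc (-1:ℝ) 1, (deriv ψ y)^2 = 0 := by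
    rw [← intervalIntegral.integral_of_le (by norm_num : (-1:ℝ) ≤ 1)]; exact hI
  have hz : (fun y => (deriv ψ y)^2) =ᵐ[volume.restrict (Ioc (-1:ℝ) 1)] 0 :=
    (integral_eq_zero_iff_of_nonneg (fun y => sq_nonneg _) hint).mp h0
  have hz' : (deriv ψ) =ᵐ[volume.restrict (Ioc (-1:ℝ) 1)] 0 := by
    filter_upwards [hz] with y hy
    exact (pow_eq_zero_iff two_ne_zero).mp hy
  have hz'' : (deriv ψ) =ᵐ[volume.restrict (Ioc (-1:ℝ) 0)] 0 :=
    ae_restrict_of_ae_restrict_of_subset (Ioc_subset_Ioc_right (by norm_num)) hz'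
  have hFTC : ∫ y in (-1:ℝ)..0, deriv ψ y = ψ 0 - ψ (-1) :=
    intervalIntegral.integral_deriv_eq_sub (fun x _ => hdiff x) (hc1.intervalIntegrable _ _)
  have hz3 : ∫ y in (-1:ℝ)..0, deriv ψ y = 0 := by
    rw [intervalIntegral.integral_of_le (by norm_num : (-1:ℝ) ≤ 0)]
    exact integral_eq_zero_of_ae hz''
  rw [hz3, hm] at hFTC
  linarith

lemma rayleigh_bound (g ρp ρm B Bc : ℝ)
    (hBc : 0 < Bc) (hBcsq : Bc ^ 2 = sSup (BcSet g ρp ρm)) (hBBc : Bc ≤ |B|)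
    (ψ : ℝ → ℝ) (hψ : ContDiff ℝ 2 ψ) (hm : ψ (-1) = 0) (hp : ψ 1 = 0) :
    g * (ρp - ρm) * (ψ 0) ^ 2 ≤ B ^ 2 * ∫ y in (-1:ℝ)..1, (deriv ψ y) ^ 2 := by
  have hdiff : Differentiable ℝ ψ := hψ.differentiable (by norm_num)
  have hc1 : Continuous (deriv ψ) := hψ.continuous_deriv (by norm_num)
  have hI0 : 0 ≤ ∫ y in (-1:ℝ)..1, (deriv ψ y) ^ 2 :=
    intervalIntegral.integral_nonneg (by norm_num) (fun y _ => sq_nonneg _)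
  by_cases h0 : ψ 0 = 0
  · rw [h0]
    simpa using mul_nonneg (sq_nonneg B) hI0
  have hIne : (∫ y in (-1:ℝ)..1, (deriv ψ y) ^ 2) ≠ 0 := fun h =>
    h0 (psi0_eq_zero_of_int ψ hψ hm h)
  have hIpos : 0 < ∫ y in (-1:ℝ)..1, (deriv ψ y) ^ 2 := lt_of_le_of_ne hI0 (Ne.symm hIne)
  -- truncated composition
  set c : ℝ → ℝ := fun y => max (-1) (min y 1) with hc_def
  set φ : ℝ → ℝ := fun y => ψ (c y) with hφ_def
  have hclip : LipschitzWith 1 c := by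
    simpa [hc_def] using ((LipschitzWith.id (α := ℝ)).min_const 1).const_max (-1)
  obtain ⟨M, hM⟩ := isCompact_Icc.exists_bound_of_continuousOn
    (s := Icc (-1:ℝ) 1) hc1.continuousOn
  set M' : NNReal := ⟨max M 0, le_max_right _ _⟩ with hM'_def
  have hψlip : LipschitzOnWith M' ψ (Icc (-1:ℝ) 1) :=
    (convex_Icc (-1:ℝ) 1).lipschitzOnWith_of_nnnorm_deriv_le (fun x _ => hdiff x)
      (fun x hx => by
        rw [← NNReal.coe_le_coe]
        exact (hM x hx).trans (le_max_left M 0))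
  have hmaps : MapsTo c univ (Icc (-1:ℝ) 1) := fun x _ =>
    ⟨le_max_left _ _, max_le (by norm_num) (min_le_right _ _)⟩
  have hφlip : LipschitzWith (M' * 1) φ :=
    lipschitzOnWith_univ.mp (hψlip.comp (hclip.lipschitzOnWith) hmaps)
  have hc0 : c 0 = 0 := by norm_num [hc_def]
  have hφ0 : φ 0 = ψ 0 := by rw [hφ_def]; simp [hc0]
  have hderiv : ∀ x ∈ Ioo (-1:ℝ) 1, deriv φ x = deriv ψ x := by
    intro x hx
    apply Filter.EventuallyEq.deriv_eq
    filter_upwards [Ioo_mem_nhds hx.1 hx.2] with z hz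
    show ψ (c z) = ψ z
    rw [hc_def]
    simp only []
    rw [min_eq_left hz.2.le, max_eq_right hz.1.le]
  have hIeq : ∫ y in (-1:ℝ)..1, (deriv φ y)^2 = ∫ y in (-1:ℝ)..1, (deriv ψ y)^2 := by
    apply intervalIntegral.integral_congr_ae
    have h1 : ∀ᵐ x : ℝ, x ≠ (1:ℝ) := by
      rw [ae_iff]
      simpa using measure_singleton (1:ℝ)
    filter_upwards [h1] with x hx hmem
    rw [Set.uIoc_of_le (by norm_num : (-1:ℝ) ≤ 1)] at hmem
    rw [hderiv x ⟨hmem.1, lt_of_le_of_ne hmem.2 hx⟩]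
  have hne : ¬ (∀ᵐ y ∂(volume.restrict (Icc (-1:ℝ) 1)), φ y = 0) := by
    intro hae
    rw [ae_restrict_iff' measurableSet_Icc] at hae
    have hφcont : Continuous φ := hφlip.continuous
    have hopen : IsOpen {y : ℝ | φ y ≠ 0} := isOpen_ne.preimage hφcont
    have h0mem : (0:ℝ) ∈ {y : ℝ | φ y ≠ 0} := by
      simpa [hφ0] using h0
    obtain ⟨ε, hε, hball⟩ := Metric.isOpen_iff.mp hopen 0 h0mem
    set ε' := min ε 1 with hε'
    have hε'pos : 0 < ε' := lt_min hε one_pos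
    have hsub : Ioo (-ε') ε' ⊆ {y : ℝ | ¬ (y ∈ Icc (-1:ℝ) 1 → φ y = 0)} := by
      intro y hy
      have h1 : ε' ≤ 1 := min_le_right _ _
      have h2 : ε' ≤ ε := min_le_left _ _
      have hyI : y ∈ Icc (-1:ℝ) 1 := ⟨by linarith [hy.1], by linarith [hy.2]⟩
      have hyb : y ∈ Metric.ball (0:ℝ) ε := by
        rw [Metric.mem_ball, Real.dist_eq, sub_zero]
        rw [abs_lt]
        constructor <;> [linarith [hy.1]; linarith [hy.2]]
      exact fun h => hball hyb (h hyI)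
    have h0vol : volume (Ioo (-ε') ε') = 0 := measure_mono_null hsub (ae_iff.mp hae)
    rw [Real.volume_Ioo, ENNReal.ofReal_eq_zero] at h0vol
    linarith
  have hmem : g * (ρp - ρm) * (ψ 0) ^ 2 / (∫ y in (-1:ℝ)..1, (deriv ψ y) ^ 2) ∈
      BcSet g ρp ρm := by
    refine ⟨φ, ⟨M' * 1, hφlip⟩, ?_, ?_, hne, ?_⟩
    · show ψ (c (-1)) = 0
      rw [show c (-1) = -1 by norm_num [hc_def]]; exact hm
    · show ψ (c 1) = 0
      rw [show c 1 = 1 by norm_num [hc_def]]; exact hp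
    · rw [hφ0, hIeq]
  have hbdd : BddAbove (BcSet g ρp ρm) := by
    by_contra h
    rw [Real.sSup_of_not_bddAbove h] at hBcsq
    nlinarith
  have hle : g * (ρp - ρm) * (ψ 0) ^ 2 / (∫ y in (-1:ℝ)..1, (deriv ψ y) ^ 2) ≤ Bc ^ 2 :=
    hBcsq ▸ le_csSup hbdd hmem
  have hle2 : Bc ^ 2 ≤ B ^ 2 := by
    have := pow_le_pow_left₀ hBc.le hBBc 2
    rwa [sq_abs] at this
  have := (div_le_iff₀ hIpos).mp (hle.trans hle2)
  linarith


lemma xiE0_nonneg (ρp ρm g B Bc xivc : ℝ)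
    (hBc : 0 < Bc) (hBcsq : Bc ^ 2 = sSup (BcSet g ρp ρm))
    (hxivcsq : xivc ^ 2 = sInf (XivcSet g ρp ρm B))
    (ξ : ℝ) (hξ : ξ ≠ 0)
    (hcase : Bc ≤ |B| ∨ (|B| < Bc ∧ |ξ| ≤ xivc))
    (ψ : ℝ → ℝ) (hψ2 : ContDiff ℝ 2 ψ) (hm : ψ (-1) = 0) (hp : ψ 1 = 0)
    (hdm : deriv ψ (-1) = 0) (hdp : deriv ψ 1 = 0) :
    0 ≤ ξ ^ 2 * E0 g ρp ρm B ξ ψ := by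
  have hd1 : Continuous (deriv ψ) := hψ2.continuous_deriv (by norm_num)
  have hcd : ContDiff ℝ 1 (deriv ψ) := by
    have h := (contDiff_succ_iff_deriv (n := 1)).mp
      (show ContDiff ℝ (1 + 1) ψ by exact_mod_cast hψ2)
    exact h.2.2
  have hd2 : Continuous (deriv (deriv ψ)) := hcd.continuous_deriv le_rfl
  set I := ∫ y in (-1:ℝ)..1, (deriv ψ y) ^ 2 with hIdef
  set K := ∫ y in (-1:ℝ)..1, (deriv (deriv ψ) y) ^ 2 with hKdef
  have hI0 : 0 ≤ I :=
    intervalIntegral.integral_nonneg (by norm_num) (fun y _ => sq_nonneg _)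
  have hK0 : 0 ≤ K :=
    intervalIntegral.integral_nonneg (by norm_num) (fun y _ => sq_nonneg _)
  have hi1 : IntervalIntegrable (fun y => B ^ 2 * (deriv ψ y) ^ 2) volume (-1) 1 :=
    (continuous_const.mul (hd1.pow 2)).intervalIntegrable _ _
  have hi2 : IntervalIntegrable (fun y => B ^ 2 / ξ ^ 2 * (deriv (deriv ψ) y) ^ 2)
      volume (-1) 1 := (continuous_const.mul (hd2.pow 2)).intervalIntegrable _ _
  have hE0 : ξ ^ 2 * E0 g ρp ρm B ξ ψ
      = (B ^ 2 * ξ ^ 2 * I + B ^ 2 * K) / 2 - ξ ^ 2 * (g * (ρp - ρm)) * (ψ 0) ^ 2 / 2 := by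
    unfold E0
    rw [intervalIntegral.integral_congr
      (g := fun y => B ^ 2 * (deriv ψ y) ^ 2 + B ^ 2 / ξ ^ 2 * (deriv (deriv ψ) y) ^ 2)
      (fun y _ => by field_simp)]
    rw [intervalIntegral.integral_add hi1 hi2,
      intervalIntegral.integral_const_mul, intervalIntegral.integral_const_mul]
    rw [← hIdef, ← hKdef]
    field_simp
  rcases hcase with hBBc | ⟨_, hξle⟩
  · have hkey : g * (ρp - ρm) * (ψ 0) ^ 2 ≤ B ^ 2 * I :=
      rayleigh_bound g ρp ρm B Bc hBc hBcsq hBBc ψ hψ2 hm hp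
    nlinarith [mul_nonneg (sq_nonneg ξ) (sub_nonneg.mpr hkey),
      mul_nonneg (sq_nonneg B) hK0]
  · rcases le_or_gt (g * (ρp - ρm) * (ψ 0) ^ 2 - B ^ 2 * I) 0 with hD | hD
    · nlinarith [mul_nonneg (sq_nonneg ξ) (neg_nonneg.mpr hD),
        mul_nonneg (sq_nonneg B) hK0]
    · have hmem : (B ^ 2 * K) / (g * (ρp - ρm) * (ψ 0) ^ 2 - B ^ 2 * I) ∈
          XivcSet g ρp ρm B := ⟨ψ, hψ2, hm, hp, hdm, hdp, hD, rfl⟩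
      have hbdd : BddBelow (XivcSet g ρp ρm B) := by
        refine ⟨0, ?_⟩
        rintro r ⟨φ, -, -, -, -, -, hpos, rfl⟩
        have h1 : 0 ≤ ∫ y in (-1:ℝ)..1, (deriv (deriv φ) y) ^ 2 :=
          intervalIntegral.integral_nonneg (by norm_num) (fun y _ => sq_nonneg _)
        exact div_nonneg (mul_nonneg (sq_nonneg B) h1) hpos.le
      have hle : xivc ^ 2 ≤ (B ^ 2 * K) / (g * (ρp - ρm) * (ψ 0) ^ 2 - B ^ 2 * I) :=
        hxivcsq ▸ csInf_le hbdd hmem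
      have hξ2 : ξ ^ 2 ≤ xivc ^ 2 := by
        have h := mul_self_le_mul_self (abs_nonneg ξ) hξle
        nlinarith [abs_mul_abs_self ξ]
      have hfin : ξ ^ 2 * (g * (ρp - ρm) * (ψ 0) ^ 2 - B ^ 2 * I) ≤ B ^ 2 * K :=
        (le_div_iff₀ hD).mp (hξ2.trans hle)
      nlinarith [mul_nonneg (sq_nonneg B) hK0]


/-- if `|B| ≥ |B|_c`, or `|B| < |B|_c` and `|ξ| ≤ |ξ|_{vc}^B`, then `α(s) ≥ 0`
for all `s > 0`. -/

theorem alpha_nonneg_of_stable_regime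
    (ρp ρm μp μm g B Bc xivc : ℝ)
    (hρm : 0 < ρm) (hρ : ρm < ρp) (hμp : 0 < μp) (hμm : 0 < μm) (hg : 0 < g)
    (hB : B ≠ 0) (hBc : 0 < Bc) (hBcsq : Bc ^ 2 = sSup (BcSet g ρp ρm))
    (hxivc0 : 0 ≤ xivc) (hxivcsq : xivc ^ 2 = sInf (XivcSet g ρp ρm B))
    (ξ : ℝ) (hξ : ξ ≠ 0)
    (hcase : Bc ≤ |B| ∨ (|B| < Bc ∧ |ξ| ≤ xivc)) :
    ∀ s : ℝ, 0 < s → 0 ≤ alpha ρp ρm μp μm g B ξ s := by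
  intro s hs
  apply Real.sInf_nonneg
  rintro r ⟨ψ, ⟨hψ2, hm, hp, hdm, hdp⟩, hJ, rfl⟩
  have hE1 : 0 ≤ E1 μp μm ξ ψ := by
    have h : 0 ≤ ∫ y in (-1:ℝ)..1, (if 0 < y then μp else μm) *
        (4 * ξ ^ 2 * (deriv ψ y) ^ 2 + (ξ ^ 2 * ψ y + deriv (deriv ψ) y) ^ 2) :=
      intervalIntegral.integral_nonneg (by norm_num) (fun y _ =>
        mul_nonneg (by split_ifs; exacts [hμp.le, hμm.le]) (by positivity))
    unfold E1; linarith
  have hE0n := xiE0_nonneg ρp ρm g B Bc xivc hBc hBcsq hxivcsq ξ hξ hcase ψ hψ2 hm hp hdm hdp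
  have := mul_nonneg hs.le hE1
  linarith


end
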